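/- For every integer n ≥ 2 and every ε ∈ (0,1), there exists μ̌ > 0 such that for every μ > μ̌ the equation h(x, ε) = μ has no solutions x ∈ (0,1). -/

import Mathlib

/-- `k_n = (1/(4n)) · Σ_{k=1}^{n-1} 1/sin(kπ/n)` -/
noncomputable def kn (n : ℕ) : ℝ :=
  (1 / (4 * n)) * ∑ k ∈ Finset.Icc 1 (n - 1), 1 / Real.sin (k * Real.pi / n)

/-- `φ_k = (2k-1)π/n`, and `u_k = cos φ_k`. -/
noncomputable def phi (n k : ℕ) : ℝ := (2 * (k : ℝ) - 1) * Real.pi / n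

/-- The reduced central configuration function
`h(x, ε) = −n·k_n·(ε−x³)/(1−x³) − (x²/(1−x³))·Σ_{k=1}^{n} [x(1−ε) − (1−εx²)u_k]/(1+x²−2xu_k)^{3/2}`,
where `u_k = cos φ_k`.  Solutions of `h(x, ε) = μ` are the rosette central configurations. -/
noncomputable def h (n : ℕ) (x ε : ℝ) : ℝ :=
  -((n : ℝ) * kn n) * (ε - x ^ 3) / (1 - x ^ 3) -
    (x ^ 2 / (1 - x ^ 3)) * ∑ k ∈ Finset.Icc 1 n,
      (x * (1 - ε) - (1 - ε * x ^ 2) * Real.cos (phi n k)) /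
        (1 + x ^ 2 - 2 * x * Real.cos (phi n k)) ^ ((3 : ℝ) / 2)

private lemma rpow_sq_three_halves {a : ℝ} (ha : 0 ≤ a) :
    (a ^ 2) ^ ((3:ℝ)/2) = a ^ 3 := by
  rw [← Real.rpow_natCast a 2, ← Real.rpow_mul ha, ← Real.rpow_natCast a 3]
  norm_num

private lemma rpow_three_halves_eq {a : ℝ} (ha : 0 ≤ a) :
    a ^ ((3:ℝ)/2) = (Real.sqrt a) ^ 3 := by
  rw [← rpow_sq_three_halves (Real.sqrt_nonneg a), Real.sq_sqrt ha]

private lemma cos_term_id (m : ℝ) (hm : 0 < Real.sin m) :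
    (1 - Real.cos (2*m)) / (2 - 2*Real.cos (2*m))^((3:ℝ)/2) = 1 / (4 * Real.sin m) := by
  have hc : Real.cos (2*m) = 1 - 2*Real.sin m^2 := by
    rw [Real.cos_two_mul]; nlinarith [Real.sin_sq_add_cos_sq m]
  have hd : 2 - 2*Real.cos (2*m) = (2*Real.sin m)^2 := by rw [hc]; ring
  rw [hd, rpow_sq_three_halves (by positivity), hc]
  field_simp
  ring

private lemma cos_phi_le {n k : ℕ} (hn : 2 ≤ n) (hk1 : 1 ≤ k) (hkn : k ≤ n) :
    Real.cos (phi n k) ≤ Real.cos (Real.pi / n) := by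
  have hπ := Real.pi_pos
  have hn0 : (0:ℝ) < n := by positivity
  have hk1' : (1:ℝ) ≤ (k:ℝ) := by exact_mod_cast hk1
  have hkn' : (k:ℝ) ≤ (n:ℝ) := by exact_mod_cast hkn
  have hlow : Real.pi / n ≤ phi n k := by
    unfold phi
    gcongr
    nlinarith
  have hhigh : phi n k ≤ 2 * Real.pi - Real.pi / n := by
    unfold phi
    rw [div_le_iff₀ hn0]
    have : (2 * Real.pi - Real.pi / n) * n = 2 * Real.pi * n - Real.pi := by
      field_simp
    rw [this]
    nlinarith
  have hpn_pos : 0 < Real.pi / n := by positivity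
  rcases le_total (phi n k) Real.pi with hc | hc
  · exact Real.cos_le_cos_of_nonneg_of_le_pi hpn_pos.le hc hlow
  · have : Real.cos (phi n k) = Real.cos (2 * Real.pi - phi n k) := by
      rw [Real.cos_two_pi_sub]
    rw [this]
    apply Real.cos_le_cos_of_nonneg_of_le_pi hpn_pos.le
    · linarith
    · linarith

set_option maxHeartbeats 1000000 in
private lemma frac_bound (p1 px dx d1 δ y : ℝ) (hδ0 : 0 < δ) (hδ1 : δ ≤ 1)
    (hdxl : δ ≤ dx) (hdxu : dx ≤ 4) (hd1l : δ ≤ d1) (hd1u : d1 ≤ 4)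
    (hp10 : 0 ≤ p1) (hp12 : p1 ≤ 2) (hpd : p1 - px ≤ 9*y)
    (hdd1 : dx - d1 ≤ 4*y) (hdd2 : d1 - dx ≤ 4*y) (hy : 0 ≤ y) :
    p1/d1^((3:ℝ)/2) - px/dx^((3:ℝ)/2) ≤ 120/δ^4 * y := by
  have hdx0 : 0 < dx := lt_of_lt_of_le hδ0 hdxl
  have hd10 : 0 < d1 := lt_of_lt_of_le hδ0 hd1l
  set s : ℝ := Real.sqrt dx with hs
  set t : ℝ := Real.sqrt d1 with ht
  set r : ℝ := Real.sqrt δ with hr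
  have hs2 : s^2 = dx := Real.sq_sqrt hdx0.le
  have ht2 : t^2 = d1 := Real.sq_sqrt hd10.le
  have hr2 : r^2 = δ := Real.sq_sqrt hδ0.le
  have hr0 : 0 < r := Real.sqrt_pos.mpr hδ0
  have hr1 : r ≤ 1 := by
    rw [hr, show (1:ℝ) = Real.sqrt 1 by simp]; exact Real.sqrt_le_sqrt hδ1
  have hrs : r ≤ s := Real.sqrt_le_sqrt hdxl
  have hrt : r ≤ t := Real.sqrt_le_sqrt hd1l
  have h24 : (2:ℝ) = Real.sqrt 4 := by
    rw [show (4:ℝ) = 2^2 by norm_num, Real.sqrt_sq]; norm_num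
  have hs4 : s ≤ 2 := by rw [hs, h24]; exact Real.sqrt_le_sqrt hdxu
  have ht4 : t ≤ 2 := by rw [ht, h24]; exact Real.sqrt_le_sqrt hd1u
  have hs0 : 0 < s := lt_of_lt_of_le hr0 hrs
  have ht0 : 0 < t := lt_of_lt_of_le hr0 hrt
  rw [rpow_three_halves_eq hd10.le, rpow_three_halves_eq hdx0.le, ← ht, ← hs]
  clear_value s t r
  have key : p1 * s^3 - px * t^3 ≤ 120/δ^4 * y * (t^3 * s^3) := by
    have hst1 : (s - t) * r ≤ 2*y := by
      rcases le_total s t with hc | hc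
      · nlinarith
      · nlinarith [mul_nonneg (sub_nonneg.mpr hc) (by linarith : (0:ℝ) ≤ s + t - 2*r)]
    have hcube : (s^3 - t^3) * r ≤ 24*y := by
      have hq : s^2 + s*t + t^2 ≤ 12 := by nlinarith
      have hq0 : 0 ≤ s^2 + s*t + t^2 := by positivity
      rcases le_total s t with hc | hc
      · have h1 : s^3 ≤ t^3 := pow_le_pow_left₀ hs0.le hc 3
        have h2 : (s^3 - t^3) * r ≤ 0 :=
          mul_nonpos_of_nonpos_of_nonneg (by linarith) hr0.le
        linarith
      · have heq : s^3 - t^3 = (s - t) * (s^2 + s*t + t^2) := by ring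
        rw [heq]
        calc (s-t)*(s^2+s*t+t^2) * r = ((s-t)*r) * (s^2+s*t+t^2) := by ring
          _ ≤ (2*y) * 12 := by
              apply mul_le_mul hst1 hq hq0 (by linarith)
          _ = 24*y := by ring
    have hterm1 : p1 * (s^3 - t^3) * r ≤ 48*y := by
      rcases le_total (s^3) (t^3) with hc | hc
      · have h1 : p1 * (s^3 - t^3) * r ≤ 0 := by
          apply mul_nonpos_of_nonpos_of_nonneg ?_ hr0.le
          exact mul_nonpos_of_nonneg_of_nonpos hp10 (by linarith)
        nlinarith
      · calc p1 * (s^3 - t^3) * r = p1 * ((s^3-t^3)*r) := by ring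
          _ ≤ 2 * (24*y) := by
              apply mul_le_mul hp12 hcube ?_ (by norm_num)
              nlinarith
          _ = 48*y := by ring
    have hterm2 : (p1 - px) * t^3 ≤ 72*y := by
      have ht8 : t^3 ≤ 8 := by nlinarith
      have ht30 : 0 ≤ t^3 := by positivity
      rcases le_total (p1 - px) 0 with hc | hc
      · nlinarith
      · calc (p1-px)*t^3 ≤ (9*y)*8 := by
              apply mul_le_mul hpd ht8 ht30 (by linarith)
          _ = 72*y := by ring
    have hub : p1 * s^3 - px * t^3 ≤ 48*y/r + 72*y := by
      have h1 : p1*(s^3-t^3) ≤ 48*y/r := by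
        rw [le_div_iff₀ hr0]; linarith
      nlinarith
    have hlb : 120*y/r^2 ≤ 120/δ^4 * y * (t^3*s^3) := by
      have hr8 : δ^4 = r^8 := by rw [← hr2]; ring
      rw [hr8, div_le_iff₀ (by positivity)]
      have hts : r^6 ≤ t^3 * s^3 := by
        calc r^6 = r^3 * r^3 := by ring
          _ ≤ t^3 * s^3 :=
            mul_le_mul (pow_le_pow_left₀ hr0.le hrt 3) (pow_le_pow_left₀ hr0.le hrs 3)
              (by positivity) (by positivity)
      calc 120*y = (120/r^8 * y * r^6) * r^2 := by field_simp
        _ ≤ (120/r^8 * y * (t^3*s^3)) * r^2 := by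
            apply mul_le_mul_of_nonneg_right ?_ (by positivity)
            apply mul_le_mul_of_nonneg_left hts
            positivity
    have hmid : 48*y/r + 72*y ≤ 120*y/r^2 := by
      rw [div_add' _ _ _ hr0.ne', div_le_div_iff₀ hr0 (by positivity)]
      have hrr : r^2 ≤ r := by nlinarith
      nlinarith [mul_nonneg hy (by nlinarith : (0:ℝ) ≤ r - r^2)]
    linarith
  rw [div_sub_div _ _ (by positivity : (t:ℝ)^3 ≠ 0) (by positivity : (s:ℝ)^3 ≠ 0),
    div_le_iff₀ (by positivity)]
  linarith [key]

private lemma poly_bound (ε u x : ℝ) (hε0 : 0 ≤ ε) (hε1 : ε ≤ 1)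
    (hu1 : -1 ≤ u) (hu2 : u ≤ 1) (hx0 : 0 ≤ x) (hx1 : x ≤ 1) :
    (1-ε)*(1-u) - x^2*(x*(1-ε) - (1-ε*x^2)*u) ≤ 9*(1-x) := by
  have e3 : (0:ℝ) ≤ 1 - x^3 ∧ 1 - x^3 ≤ 3*(1-x) := by
    constructor <;> nlinarith [sq_nonneg x, sq_nonneg (1-x)]
  have e2 : (0:ℝ) ≤ 1 - x^2 ∧ 1 - x^2 ≤ 2*(1-x) := by
    constructor <;> nlinarith
  have e4 : (0:ℝ) ≤ 1 - x^4 ∧ 1 - x^4 ≤ 4*(1-x) := by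
    constructor <;> nlinarith [sq_nonneg x, sq_nonneg (x^2), sq_nonneg (1-x), sq_nonneg (1+x), sq_nonneg (x-x^2)]
  have key : (1-ε)*(1-u) - x^2*(x*(1-ε) - (1-ε*x^2)*u)
      = (1-ε)*(1-x^3) - u*(1-x^2) + ε*u*(1-x^4) := by ring
  rw [key]
  have b1 : (1-ε)*(1-x^3) ≤ 3*(1-x) := by nlinarith [e3.1, e3.2]
  have b2 : -(u*(1-x^2)) ≤ 2*(1-x) := by nlinarith [e2.1, e2.2]
  have b3 : ε*u*(1-x^4) ≤ 4*(1-x) := by nlinarith [e4.1, e4.2, mul_nonneg hε0 e4.1]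
  linarith

private lemma sin_odd_pos {n j : ℕ} (hn : 2 ≤ n) (hj1 : 1 ≤ j) (hjn : j ≤ n) :
    0 < Real.sin ((2*(j:ℝ)-1) * Real.pi / (2*n)) := by
  have hπ := Real.pi_pos
  have hn0 : (0:ℝ) < n := by positivity
  have hj1' : (1:ℝ) ≤ (j:ℝ) := by exact_mod_cast hj1
  have hjn' : (j:ℝ) ≤ (n:ℝ) := by exact_mod_cast hjn
  apply Real.sin_pos_of_pos_of_lt_pi
  · apply div_pos (by nlinarith) (by positivity)
  · rw [div_lt_iff₀ (by positivity)]
    nlinarith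

private lemma sin_even_pos {n k : ℕ} (hn : 2 ≤ n) (hk1 : 1 ≤ k) (hkn : k ≤ n - 1) :
    0 < Real.sin ((k:ℝ) * Real.pi / n) := by
  have hπ := Real.pi_pos
  have hn0 : (0:ℝ) < n := by positivity
  have hk1' : (1:ℝ) ≤ (k:ℝ) := by exact_mod_cast hk1
  have hkn' : (k:ℝ) + 1 ≤ (n:ℝ) := by exact_mod_cast (by omega : k + 1 ≤ n)
  apply Real.sin_pos_of_pos_of_lt_pi
  · positivity
  · rw [div_lt_iff₀ hn0]; nlinarith

private lemma sum_compare {n : ℕ} (hn : 2 ≤ n) :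
    ∑ k ∈ Finset.Icc 1 (n-1), 1 / Real.sin ((k:ℝ) * Real.pi / n)
      ≤ ∑ j ∈ Finset.Icc 1 n, 1 / Real.sin ((2*(j:ℝ)-1) * Real.pi / (2*n)) := by
  have hπ := Real.pi_pos
  have hn0 : (0:ℝ) < n := by positivity
  set f : ℕ → ℝ := fun j => 1 / Real.sin ((2*(j:ℝ)-1) * Real.pi / (2*n)) with hf
  set ι : ℕ → ℕ := fun k => if 2*k ≤ n then k else k+1 with hι
  have step1 : ∀ k ∈ Finset.Icc 1 (n-1), 1 / Real.sin ((k:ℝ) * Real.pi / n) ≤ f (ι k) := by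
    intro k hk
    rw [Finset.mem_Icc] at hk
    obtain ⟨hk1, hkn⟩ := hk
    have hk1' : (1:ℝ) ≤ (k:ℝ) := by exact_mod_cast hk1
    have hkn' : (k:ℝ) + 1 ≤ (n:ℝ) := by exact_mod_cast (by omega : k + 1 ≤ n)
    have hsinb : 0 < Real.sin ((k:ℝ) * Real.pi / n) := sin_even_pos hn hk1 hkn
    have hιmem : 1 ≤ ι k ∧ ι k ≤ n := by
      rw [hι]; dsimp only; split <;> omega
    have hsina : 0 < Real.sin ((2*((ι k):ℝ)-1) * Real.pi / (2*n)) :=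
      sin_odd_pos hn hιmem.1 hιmem.2
    rw [hf]
    apply one_div_le_one_div_of_le hsina
    rw [hι]; dsimp only
    by_cases hcase : 2*k ≤ n
    · simp only [hcase, if_true]
      have hcase' : 2*(k:ℝ) ≤ (n:ℝ) := by exact_mod_cast hcase
      have hmem1 : (2*(k:ℝ)-1) * Real.pi / (2*n) ∈ Set.Icc (-(Real.pi/2)) (Real.pi/2) := by
        constructor
        · have h0 : (0:ℝ) ≤ (2*(k:ℝ)-1) * Real.pi / (2*n) :=
            div_nonneg (by nlinarith) (by positivity)
          linarith
        · rw [div_le_div_iff₀ (by positivity) (by norm_num : (0:ℝ) < 2)]; nlinarith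
      have hmem2 : (k:ℝ) * Real.pi / n ∈ Set.Icc (-(Real.pi/2)) (Real.pi/2) := by
        constructor
        · have h0 : (0:ℝ) ≤ (k:ℝ) * Real.pi / n := by positivity
          linarith
        · rw [div_le_div_iff₀ hn0 (by norm_num : (0:ℝ) < 2)]; nlinarith
      apply Real.strictMonoOn_sin.monotoneOn hmem1 hmem2
      rw [div_le_div_iff₀ (by positivity) hn0]
      nlinarith
    · simp only [hcase, if_false]
      push_cast
      have hcase' : (n:ℝ) < 2*(k:ℝ) := by exact_mod_cast (by omega : n < 2*k)
      have haπ : (2*((k:ℝ)+1)-1) * Real.pi / (2*n) ≤ Real.pi := by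
        rw [div_le_iff₀ (by positivity)]; nlinarith
      have haπ2 : Real.pi / 2 ≤ (2*((k:ℝ)+1)-1) * Real.pi / (2*n) := by
        rw [div_le_div_iff₀ (by norm_num : (0:ℝ) < 2) (by positivity)]; nlinarith
      have hbπ : (k:ℝ) * Real.pi / n ≤ Real.pi := by
        rw [div_le_iff₀ hn0]; nlinarith
      have hbπ2 : Real.pi / 2 ≤ (k:ℝ) * Real.pi / n := by
        rw [div_le_div_iff₀ (by norm_num : (0:ℝ) < 2) hn0]; nlinarith
      have hab : (k:ℝ) * Real.pi / n ≤ (2*((k:ℝ)+1)-1) * Real.pi / (2*n) := by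
        rw [div_le_div_iff₀ hn0 (by positivity)]; nlinarith
      rw [← Real.sin_pi_sub ((2*((k:ℝ)+1)-1) * Real.pi / (2*n)),
        ← Real.sin_pi_sub ((k:ℝ) * Real.pi / n)]
      apply Real.strictMonoOn_sin.monotoneOn ?_ ?_ (by linarith)
      · constructor <;> [linarith; linarith]
      · constructor <;> [linarith; linarith]
  have hinj : ∀ a ∈ Finset.Icc 1 (n-1), ∀ b ∈ Finset.Icc 1 (n-1), ι a = ι b → a = b := by
    intro a ha b hb hab
    rw [Finset.mem_Icc] at ha hb
    rw [hι] at hab; dsimp only at hab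
    split_ifs at hab <;> omega
  have hsub : (Finset.Icc 1 (n-1)).image ι ⊆ Finset.Icc 1 n := by
    intro j hj
    rw [Finset.mem_image] at hj
    obtain ⟨k, hk, rfl⟩ := hj
    rw [Finset.mem_Icc] at hk ⊢
    rw [hι]; dsimp only; split <;> omega
  calc ∑ k ∈ Finset.Icc 1 (n-1), 1 / Real.sin ((k:ℝ) * Real.pi / n)
      ≤ ∑ k ∈ Finset.Icc 1 (n-1), f (ι k) := Finset.sum_le_sum step1
    _ = ∑ j ∈ (Finset.Icc 1 (n-1)).image ι, f j := (Finset.sum_image hinj).symm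
    _ ≤ ∑ j ∈ Finset.Icc 1 n, f j := by
        apply Finset.sum_le_sum_of_subset_of_nonneg hsub
        intro j hj _
        rw [Finset.mem_Icc] at hj
        exact le_of_lt (by rw [hf]; exact one_div_pos.mpr (sin_odd_pos hn hj.1 hj.2))

set_option maxHeartbeats 1600000 in
/-- For `n ≥ 2`, `ε ∈ (0,1)`, there exists `μ̌ > 0` such that for every `μ > μ̌`
the equation `h(x, ε) = μ` has no solutions `x ∈ (0,1)`. -/
theorem no_cc_lt_one_for_large_mu (n : ℕ) (hn : 2 ≤ n) (ε : ℝ)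
    (hε : ε ∈ Set.Ioo (0 : ℝ) 1) :
    ∃ muCheck : ℝ, 0 < muCheck ∧ ∀ μ : ℝ, muCheck < μ →
      ∀ x ∈ Set.Ioo (0 : ℝ) 1, h n x ε ≠ μ := by
  obtain ⟨hε0, hε1⟩ := hε
  have hπ := Real.pi_pos
  have hn0 : (0:ℝ) < n := by positivity
  have hn2 : (2:ℝ) ≤ (n:ℝ) := by exact_mod_cast hn
  have hsinp : 0 < Real.sin (Real.pi / n) := by
    apply Real.sin_pos_of_pos_of_lt_pi (by positivity)
    rw [div_lt_iff₀ hn0]; nlinarith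
  set δ : ℝ := Real.sin (Real.pi / n)^2 with hδdef
  have hδ0 : 0 < δ := by positivity
  have hδ1 : δ ≤ 1 := by
    rw [hδdef]
    nlinarith [Real.sin_le_one (Real.pi/n)]
  have hδcos : δ = 1 - Real.cos (Real.pi/n)^2 := by
    rw [hδdef]; nlinarith [Real.sin_sq_add_cos_sq (Real.pi/n)]
  set L : ℝ := (n:ℝ) * (120/δ^4) with hLdef
  have hL0 : 0 < L := by positivity
  refine ⟨L + (n:ℝ)*|kn n| + 1, by positivity, ?_⟩
  intro μ hμ x hx hcontra
  obtain ⟨hx0, hx1⟩ := hx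
  have h1x3 : 0 < 1 - x^3 := by
    have : x^3 < 1 := pow_lt_one₀ hx0.le hx1 (by norm_num)
    linarith
  -- the total bound
  suffices hbound : h n x ε ≤ L + (n:ℝ)*|kn n| by
    rw [hcontra] at hbound; linarith
  unfold h
  set S : ℝ := ∑ k ∈ Finset.Icc 1 n,
      (x * (1 - ε) - (1 - ε * x ^ 2) * Real.cos (phi n k)) /
        (1 + x ^ 2 - 2 * x * Real.cos (phi n k)) ^ ((3 : ℝ) / 2) with hSdef
  set Gx : ℝ := ∑ k ∈ Finset.Icc 1 n,
      x^2 * ((x * (1 - ε) - (1 - ε * x ^ 2) * Real.cos (phi n k)) /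
        (1 + x ^ 2 - 2 * x * Real.cos (phi n k)) ^ ((3 : ℝ) / 2)) with hGxdef
  set G1 : ℝ := ∑ k ∈ Finset.Icc 1 n,
      (1-ε) * (1 - Real.cos (phi n k)) / (2 - 2*Real.cos (phi n k)) ^ ((3 : ℝ) / 2)
    with hG1def
  have hGxS : x^2 * S = Gx := by rw [hSdef, hGxdef, Finset.mul_sum]
  have hrw : -((n : ℝ) * kn n) * (ε - x ^ 3) / (1 - x ^ 3) - (x ^ 2 / (1 - x ^ 3)) * S
      = ((n:ℝ)*kn n*(1-ε) - Gx)/(1-x^3) - (n:ℝ)*kn n := by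
    rw [← hGxS]
    field_simp
    ring
  rw [hrw]
  -- facts about each k
  have hfacts : ∀ k ∈ Finset.Icc 1 n,
      (1-ε) * (1 - Real.cos (phi n k)) / (2 - 2*Real.cos (phi n k)) ^ ((3 : ℝ) / 2)
      - x^2 * ((x * (1 - ε) - (1 - ε * x ^ 2) * Real.cos (phi n k)) /
        (1 + x ^ 2 - 2 * x * Real.cos (phi n k)) ^ ((3 : ℝ) / 2))
      ≤ 120/δ^4 * (1-x) := by
    intro k hk
    rw [Finset.mem_Icc] at hk
    set u : ℝ := Real.cos (phi n k) with hu
    have hule : u ≤ Real.cos (Real.pi/n) := cos_phi_le hn hk.1 hk.2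
    have hu1 : -1 ≤ u := Real.neg_one_le_cos _
    have hu2 : u ≤ 1 := Real.cos_le_one _
    have hcos1 : Real.cos (Real.pi/n) ≤ 1 := Real.cos_le_one _
    have hdxl : δ ≤ 1 + x^2 - 2*x*u := by
      rw [hδcos]
      nlinarith [sq_nonneg (x - Real.cos (Real.pi/n))]
    have hd1l : δ ≤ 2 - 2*u := by
      rw [hδcos]
      nlinarith [sq_nonneg (1 - Real.cos (Real.pi/n))]
    have hdxu : 1 + x^2 - 2*x*u ≤ 4 := by nlinarith
    have hd1u : 2 - 2*u ≤ 4 := by nlinarith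
    have hdd1 : (1 + x^2 - 2*x*u) - (2 - 2*u) ≤ 4*(1-x) := by
      nlinarith [mul_nonneg (by linarith : (0:ℝ) ≤ 1-x) (by linarith : (0:ℝ) ≤ x + 5 - 2*u)]
    have hdd2 : (2 - 2*u) - (1 + x^2 - 2*x*u) ≤ 4*(1-x) := by
      nlinarith [mul_nonneg (by linarith : (0:ℝ) ≤ 1-x) (by linarith : (0:ℝ) ≤ 3 - x + 2*u)]
    have hp10 : 0 ≤ (1-ε)*(1-u) := mul_nonneg (by linarith) (by linarith)
    have hp12 : (1-ε)*(1-u) ≤ 2 := by nlinarith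
    have hpoly := poly_bound ε u x hε0.le hε1.le hu1 hu2 hx0.le hx1.le
    have := frac_bound ((1-ε)*(1-u)) (x^2*(x*(1-ε) - (1-ε*x^2)*u))
      (1 + x^2 - 2*x*u) (2 - 2*u) δ (1-x) hδ0 hδ1 hdxl hdxu hd1l hd1u
      hp10 hp12 hpoly hdd1 hdd2 (by linarith)
    calc (1-ε) * (1 - u) / (2 - 2*u) ^ ((3 : ℝ) / 2)
        - x^2 * ((x * (1 - ε) - (1 - ε * x ^ 2) * u) /
          (1 + x ^ 2 - 2 * x * u) ^ ((3 : ℝ) / 2))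
        = (1-ε)*(1-u)/(2-2*u)^((3:ℝ)/2)
          - (x^2*(x*(1-ε) - (1-ε*x^2)*u))/(1 + x^2 - 2*x*u)^((3:ℝ)/2) := by
          ring
      _ ≤ 120/δ^4 * (1-x) := this
  -- sum of differences
  have hdiffsum : G1 - Gx ≤ L * (1-x) := by
    rw [hG1def, hGxdef, ← Finset.sum_sub_distrib]
    calc (∑ k ∈ Finset.Icc 1 n, ((1-ε) * (1 - Real.cos (phi n k)) / (2 - 2*Real.cos (phi n k)) ^ ((3 : ℝ) / 2)
      - x^2 * ((x * (1 - ε) - (1 - ε * x ^ 2) * Real.cos (phi n k)) /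
        (1 + x ^ 2 - 2 * x * Real.cos (phi n k)) ^ ((3 : ℝ) / 2))))
        ≤ ∑ _k ∈ Finset.Icc 1 n, 120/δ^4 * (1-x) := Finset.sum_le_sum hfacts
      _ = (n:ℝ) * (120/δ^4 * (1-x)) := by
          rw [Finset.sum_const, Nat.card_Icc]
          simp [nsmul_eq_mul]
      _ = L * (1-x) := by rw [hLdef]; ring
  -- A ≤ G1
  have hA : (n:ℝ)*kn n*(1-ε) ≤ G1 := by
    have hkneq : (n:ℝ)*kn n = (1/4) * ∑ k ∈ Finset.Icc 1 (n-1), 1 / Real.sin ((k:ℝ) * Real.pi / n) := by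
      rw [kn, ← mul_assoc]
      congr 1
      field_simp
    have hG1eq : G1 = ∑ j ∈ Finset.Icc 1 n,
        (1-ε) * (1 / (4 * Real.sin ((2*(j:ℝ)-1) * Real.pi / (2*n)))) := by
      rw [hG1def]
      apply Finset.sum_congr rfl
      intro j hj
      rw [Finset.mem_Icc] at hj
      have hm : 0 < Real.sin ((2*(j:ℝ)-1) * Real.pi / (2*n)) := sin_odd_pos hn hj.1 hj.2
      have hphi : phi n j = 2*((2*(j:ℝ)-1) * Real.pi / (2*n)) := by
        unfold phi
        field_simp
      rw [hphi, mul_div_assoc, cos_term_id _ hm]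
    rw [hG1eq, hkneq]
    calc (1/4) * (∑ k ∈ Finset.Icc 1 (n-1), 1 / Real.sin ((k:ℝ) * Real.pi / n)) * (1-ε)
        ≤ (1/4) * (∑ j ∈ Finset.Icc 1 n, 1 / Real.sin ((2*(j:ℝ)-1) * Real.pi / (2*n))) * (1-ε) := by
          apply mul_le_mul_of_nonneg_right ?_ (by linarith)
          exact mul_le_mul_of_nonneg_left (sum_compare hn) (by norm_num)
      _ = ∑ j ∈ Finset.Icc 1 n, (1-ε) * (1 / (4 * Real.sin ((2*(j:ℝ)-1) * Real.pi / (2*n)))) := by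
          rw [Finset.mul_sum, Finset.sum_mul]
          apply Finset.sum_congr rfl
          intro j hj
          rw [mul_comm]
          congr 1
          rw [div_mul_eq_mul_div, one_mul, one_div, one_div, mul_inv]
          ring
  -- final assembly
  have hsplit : ((n:ℝ)*kn n*(1-ε) - Gx)/(1-x^3)
      = ((n:ℝ)*kn n*(1-ε) - G1)/(1-x^3) + (G1 - Gx)/(1-x^3) := by
    rw [← add_div, sub_add_sub_cancel]
  rw [hsplit]
  have t1 : ((n:ℝ)*kn n*(1-ε) - G1)/(1-x^3) ≤ 0 :=
    div_nonpos_of_nonpos_of_nonneg (by linarith) h1x3.le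
  have t2 : (G1 - Gx)/(1-x^3) ≤ L := by
    rw [div_le_iff₀ h1x3]
    have h13 : 1 - x ≤ 1 - x^3 := by
      nlinarith [mul_nonneg hx0.le (by nlinarith : (0:ℝ) ≤ 1 - x^2)]
    calc G1 - Gx ≤ L * (1-x) := hdiffsum
      _ ≤ L * (1-x^3) := mul_le_mul_of_nonneg_left h13 hL0.le
  have t3 : -((n:ℝ)*kn n) ≤ (n:ℝ)*|kn n| := by
    rw [← mul_neg]
    exact mul_le_mul_of_nonneg_left (neg_le_abs _) hn0.le
  linarith
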